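/- For any formula A of the bimodal language L_pf, PF proves the implication ⋀Φ(A) → A if and only if A is a theorem of PF^ω, where Φ(A) = { □p B → □f B : □p B is a subformula of A }. -/

import Mathlib

namespace PFPaper

/-- Formulas of the bimodal language `L_pf`, with propositional variables indexed by `ℕ`,
connectives `¬, ∧, ∨, →` and two modal operators `□p` (`boxp`) and `□f` (`boxf`). -/
inductive Formula : Type
  | var : ℕ → Formula
  | neg : Formula → Formula
  | and : Formula → Formula → Formula
  | or : Formula → Formula → Formula
  | imp : Formula → Formula → Formula
  | boxp : Formula → Formula
  | boxf : Formula → Formula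
  deriving DecidableEq

/-- `◇p A := ¬□p¬A`. -/
def diap (A : Formula) : Formula := .neg (.boxp (.neg A))

/-- `◇f A := ¬□f¬A`. -/
def diaf (A : Formula) : Formula := .neg (.boxf (.neg A))

/-- `A ↔ B` as an abbreviation: `(A → B) ∧ (B → A)`. -/
def iffF (A B : Formula) : Formula := .and (.imp A B) (.imp B A)

/-- `A` is a propositional tautology of `L_pf`: every Boolean assignment that treats
variables and boxed formulas as atoms and respects the connectives makes `A` true. -/
def Taut (A : Formula) : Prop :=
  ∀ f : Formula → Bool,
    (∀ B, f (.neg B) = !(f B)) →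
    (∀ B C, f (.and B C) = (f B && f C)) →
    (∀ B C, f (.or B C) = (f B || f C)) →
    (∀ B C, f (.imp B C) = (!(f B) || f C)) →
    f A = true

/-- The bimodal logic `PF`. -/
inductive PF : Formula → Prop
  | taut {A} : Taut A → PF A
  | kp (A B) : PF (.imp (.boxp (.imp A B)) (.imp (.boxp A) (.boxp B)))
  | lob (A) : PF (.imp (.boxp (.imp (.boxp A) A)) (.boxp A))
  | kf (A B) : PF (.imp (.boxf (.imp A B)) (.imp (.boxf A) (.boxf B)))
  | tf (A) : PF (.imp (.boxf A) A)
  | fourf (A) : PF (.imp (.boxf A) (.boxf (.boxf A)))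
  | dot2f (A) : PF (.imp (diaf (.boxf A)) (.boxf (diaf A)))
  | pf1 (A) : PF (.imp (.boxp A) (.boxf (.boxp A)))
  | pf2 (A) : PF (.imp (diap A) (.boxf (diap A)))
  | pf3 (A) : PF (.imp (.boxp A) (.boxp (.boxf A)))
  | mp {A B} : PF (.imp A B) → PF A → PF B
  | necp {A} : PF A → PF (.boxp A)
  | necf {A} : PF A → PF (.boxf A)

/-- The logic `PF^ω`: axioms are all theorems of `PF` together with all formulas
`□p A → □f A`; the sole rule is modus ponens. -/
inductive PFomega : Formula → Prop
  | ofPF {A} : PF A → PFomega A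
  | reflAx (A) : PFomega (.imp (.boxp A) (.boxf A))
  | mp {A B} : PFomega (.imp A B) → PFomega A → PFomega B

section Semantics

variable {W : Type}

/-- Kripke satisfaction on a frame `(W, R, S)` (`R` = `⊏` interprets `□p`,
`S` = `≼` interprets `□f`) with valuation `V`. -/
def Sat (R S : W → W → Prop) (V : W → ℕ → Prop) : W → Formula → Prop
  | w, .var n => V w n
  | w, .neg A => ¬ Sat R S V w A
  | w, .and A B => Sat R S V w A ∧ Sat R S V w B
  | w, .or A B => Sat R S V w A ∨ Sat R S V w B
  | w, .imp A B => Sat R S V w A → Sat R S V w B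
  | w, .boxp A => ∀ v, R w v → Sat R S V v A
  | w, .boxf A => ∀ v, S w v → Sat R S V v A

/-- `A` is valid on the frame `(W, R, S)`. -/
def ValidOn (R S : W → W → Prop) (A : Formula) : Prop :=
  ∀ (V : W → ℕ → Prop) (w : W), Sat R S V w A

/-- `(W, R, S)` is a `PF`-frame: all theorems of `PF` are valid on it. -/
def IsPFFrame (R S : W → W → Prop) : Prop :=
  ∀ A : Formula, PF A → ValidOn R S A

/-- The symmetric closure `∼` of `≼`. -/
def SymCl (S : W → W → Prop) (x y : W) : Prop := S x y ∨ S y x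

/-- `∼⁺`: the transitive closure of the symmetric closure of `≼`. -/
def EqCl (S : W → W → Prop) : W → W → Prop := Relation.TransGen (SymCl S)

/-- The cluster of `x`: its `∼⁺`-equivalence class. -/
def cluster (S : W → W → Prop) (x : W) : Set W := {y | EqCl S x y}

/-- A frame is nice iff `x ⊏ z` and `y ≼ z` imply `x ⊏ y`. -/
def Nice (R S : W → W → Prop) : Prop := ∀ x y z : W, R x z → S y z → R x y

/-- A nice `PF`-frame is rooted iff there is a `⊏`-root cluster and every cluster
has a `≼`-root element. -/
def Rooted (R S : W → W → Prop) : Prop :=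
  (∃ r : W, ∀ x : W, cluster S r = cluster S x ∨ R r x) ∧
  (∀ x : W, ∃ y ∈ cluster S x, ∀ z ∈ cluster S x, S y z)

/-- The cluster of `x`, preordered by `≼`, is a pre-Boolean algebra: its quotient by
`x ≈ y ↔ (x ≼ y ∧ y ≼ x)` forms a Boolean algebra, i.e. there is a Boolean algebra `B`
and a surjection `f` from the cluster onto `B` with `a ≼ b ↔ f a ≤ f b`. -/
def ClusterPBA (S : W → W → Prop) (x : W) : Prop :=
  ∃ (B : Type) (inst : BooleanAlgebra B) (f : cluster S x → B),
    Function.Surjective f ∧ ∀ a b : cluster S x, S a.1 b.1 ↔ inst.le (f a) (f b)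

end Semantics

/-- The list of subformulas of a formula. -/
def subf : Formula → List Formula
  | .var n => [.var n]
  | .neg A => .neg A :: subf A
  | .and A B => .and A B :: (subf A ++ subf B)
  | .or A B => .or A B :: (subf A ++ subf B)
  | .imp A B => .imp A B :: (subf A ++ subf B)
  | .boxp A => .boxp A :: subf A
  | .boxf A => .boxf A :: subf A

/-- `Φ(A) = { □p B → □f B : □p B ∈ Sub(A) }`. -/
def Phi (A : Formula) : List Formula :=
  (subf A).filterMap fun B =>
    match B with
    | .boxp C => some (.imp (.boxp C) (.boxf C))
    | _ => none

/-- Conjunction of a finite list of formulas (a fixed tautology if the list is empty). -/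
def conjList : List Formula → Formula
  | [] => .imp (.var 0) (.var 0)
  | [B] => B
  | B :: C :: t => .and B (conjList (C :: t))

/-- An injective, effective coding of formulas by natural numbers. -/
def encodeF : Formula → ℕ
  | .var n => Nat.pair 0 n
  | .neg A => Nat.pair 1 (encodeF A)
  | .and A B => Nat.pair 2 (Nat.pair (encodeF A) (encodeF B))
  | .or A B => Nat.pair 3 (Nat.pair (encodeF A) (encodeF B))
  | .imp A B => Nat.pair 4 (Nat.pair (encodeF A) (encodeF B))
  | .boxp A => Nat.pair 5 (encodeF A)
  | .boxf A => Nat.pair 6 (encodeF A)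

/-- Formulas of the unimodal language `L_p` (only `□p`, written `box`). -/
inductive LpForm : Type
  | var : ℕ → LpForm
  | neg : LpForm → LpForm
  | and : LpForm → LpForm → LpForm
  | or : LpForm → LpForm → LpForm
  | imp : LpForm → LpForm → LpForm
  | box : LpForm → LpForm
  deriving DecidableEq

/-- Propositional tautologies of `L_p`. -/
def TautLp (A : LpForm) : Prop :=
  ∀ f : LpForm → Bool,
    (∀ B, f (.neg B) = !(f B)) →
    (∀ B C, f (.and B C) = (f B && f C)) →
    (∀ B C, f (.or B C) = (f B || f C)) →
    (∀ B C, f (.imp B C) = (!(f B) || f C)) →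
    f A = true

/-- The provability logic `GL` in the language `L_p`. -/
inductive GLLogic : LpForm → Prop
  | taut {A} : TautLp A → GLLogic A
  | k (A B) : GLLogic (.imp (.box (.imp A B)) (.imp (.box A) (.box B)))
  | lob (A) : GLLogic (.imp (.box (.imp (.box A) A)) (.box A))
  | mp {A B} : GLLogic (.imp A B) → GLLogic A → GLLogic B
  | nec {A} : GLLogic A → GLLogic (.box A)

/-- Solovay's logic `S`: axioms are all theorems of `GL` and all `□p A → A`;
the sole rule is modus ponens. -/
inductive SLogic : LpForm → Prop
  | ofGL {A} : GLLogic A → SLogic A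
  | reflAx (A) : SLogic (.imp (.box A) A)
  | mp {A B} : SLogic (.imp A B) → SLogic A → SLogic B

/-- Embedding of `L_p` into `L_pf` (`box ↦ □p`). -/
def LpForm.toFormula : LpForm → Formula
  | .var n => .var n
  | .neg A => .neg A.toFormula
  | .and A B => .and A.toFormula B.toFormula
  | .or A B => .or A.toFormula B.toFormula
  | .imp A B => .imp A.toFormula B.toFormula
  | .box A => .boxp A.toFormula

/-- The fusion `GL⊗Triv` in the language `L_pf`: the `GL`-axioms for `□p`,
the axiom `A ↔ □f A`, with modus ponens and necessitation for `□p`. -/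
inductive GLTriv : Formula → Prop
  | taut {A} : Taut A → GLTriv A
  | kp (A B) : GLTriv (.imp (.boxp (.imp A B)) (.imp (.boxp A) (.boxp B)))
  | lob (A) : GLTriv (.imp (.boxp (.imp (.boxp A) A)) (.boxp A))
  | triv (A) : GLTriv (iffF A (.boxf A))
  | mp {A B} : GLTriv (.imp A B) → GLTriv A → GLTriv B
  | necp {A} : GLTriv A → GLTriv (.boxp A)

/-- Formulas of the unimodal language `L_f` (only `□f`, written `box`). -/
inductive LfForm : Type
  | var : ℕ → LfForm
  | neg : LfForm → LfForm
  | and : LfForm → LfForm → LfForm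
  | or : LfForm → LfForm → LfForm
  | imp : LfForm → LfForm → LfForm
  | box : LfForm → LfForm
  deriving DecidableEq

/-- `◇f A := ¬□f¬A` in `L_f`. -/
def LfForm.dia (A : LfForm) : LfForm := .neg (.box (.neg A))

/-- Propositional tautologies of `L_f`. -/
def TautLf (A : LfForm) : Prop :=
  ∀ f : LfForm → Bool,
    (∀ B, f (.neg B) = !(f B)) →
    (∀ B C, f (.and B C) = (f B && f C)) →
    (∀ B C, f (.or B C) = (f B || f C)) →
    (∀ B C, f (.imp B C) = (!(f B) || f C)) →
    f A = true

/-- The modal logic `S4.2` in the language `L_f`. -/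
inductive S42 : LfForm → Prop
  | taut {A} : TautLf A → S42 A
  | k (A B) : S42 (.imp (.box (.imp A B)) (.imp (.box A) (.box B)))
  | t (A) : S42 (.imp (.box A) A)
  | four (A) : S42 (.imp (.box A) (.box (.box A)))
  | dot2 (A) : S42 (.imp (LfForm.dia (.box A)) (.box (LfForm.dia A)))
  | mp {A B} : S42 (.imp A B) → S42 A → S42 B
  | nec {A} : S42 A → S42 (.box A)

/-- Embedding of `L_f` into `L_pf` (`box ↦ □f`). -/
def LfForm.toFormula : LfForm → Formula
  | .var n => .var n
  | .neg A => .neg A.toFormula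
  | .and A B => .and A.toFormula B.toFormula
  | .or A B => .or A.toFormula B.toFormula
  | .imp A B => .imp A.toFormula B.toFormula
  | .box A => .boxf A.toFormula

/-- `L_pf`-formulas with no occurrence of `□p`, i.e. `L_f`-formulas. -/
inductive NoBoxp : Formula → Prop
  | var (n) : NoBoxp (.var n)
  | neg {A} : NoBoxp A → NoBoxp (.neg A)
  | and {A B} : NoBoxp A → NoBoxp B → NoBoxp (.and A B)
  | or {A B} : NoBoxp A → NoBoxp B → NoBoxp (.or A B)
  | imp {A B} : NoBoxp A → NoBoxp B → NoBoxp (.imp A B)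
  | boxf {A} : NoBoxp A → NoBoxp (.boxf A)

/-- Clauses of `□p`-CNF: disjunctions `□p D_0 ∨ ⋯ ∨ □p D_{k-1} ∨ ◇p E ∨ F`
with `F` an `L_f`-formula (each of the three parts may be absent). -/
inductive IsClause : Formula → Prop
  | lf {F} : NoBoxp F → IsClause F
  | dia (E : Formula) : IsClause (diap E)
  | diaOr (E : Formula) {F} : NoBoxp F → IsClause (.or (diap E) F)
  | boxAlone (D : Formula) : IsClause (.boxp D)
  | boxOr (D : Formula) {C} : IsClause C → IsClause (.or (.boxp D) C)

/-- A formula in `□p`-conjunctive normal form: a conjunction of clauses. -/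
inductive IsCNF : Formula → Prop
  | clause {C} : IsClause C → IsCNF C
  | and {A B} : IsCNF A → IsCNF B → IsCNF (.and A B)

/-- The `□p`-modal degree of a formula. -/
def deg : Formula → ℕ
  | .var _ => 0
  | .neg A => deg A
  | .and A B => max (deg A) (deg B)
  | .or A B => max (deg A) (deg B)
  | .imp A B => max (deg A) (deg B)
  | .boxf A => deg A
  | .boxp A => deg A + 1

/-! ### Propositional toolkit -/

def Bot : Formula := .neg (.imp (.var 0) (.var 0))

def impList (L : List Formula) (X : Formula) : Formula := L.foldr .imp X

@[simp] lemma impList_nil (X : Formula) : impList [] X = X := rfl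
@[simp] lemma impList_cons (Z : Formula) (L : List Formula) (X : Formula) :
    impList (Z :: L) X = .imp Z (impList L X) := rfl
lemma impList_append (L M : List Formula) (X : Formula) :
    impList (L ++ M) X = impList L (impList M X) := List.foldr_append ..

section Tauts

lemma t_id (X : Formula) : PF (.imp X X) :=
  PF.taut fun f _ _ _ hi => by simp only [hi]; cases f X <;> rfl

lemma t_k (X Y : Formula) : PF (.imp X (.imp Y X)) :=
  PF.taut fun f _ _ _ hi => by simp only [hi]; cases f X <;> cases f Y <;> rfl

lemma t_comp (X Y Z : Formula) :
    PF (.imp (.imp X Y) (.imp (.imp Y Z) (.imp X Z))) :=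
  PF.taut fun f _ _ _ hi => by
    simp only [hi]; cases f X <;> cases f Y <;> cases f Z <;> rfl

lemma t_mono (P Q Z : Formula) :
    PF (.imp (.imp P Q) (.imp (.imp Z P) (.imp Z Q))) :=
  PF.taut fun f _ _ _ hi => by
    simp only [hi]; cases f P <;> cases f Q <;> cases f Z <;> rfl

lemma t_swap (X Y Z : Formula) :
    PF (.imp (.imp X (.imp Y Z)) (.imp Y (.imp X Z))) :=
  PF.taut fun f _ _ _ hi => by
    simp only [hi]; cases f X <;> cases f Y <;> cases f Z <;> rfl

lemma t_contract (X Y : Formula) :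
    PF (.imp (.imp X (.imp X Y)) (.imp X Y)) :=
  PF.taut fun f _ _ _ hi => by
    simp only [hi]; cases f X <;> cases f Y <;> rfl

lemma t_apply (X Y : Formula) : PF (.imp X (.imp (.imp X Y) Y)) :=
  PF.taut fun f _ _ _ hi => by
    simp only [hi]; cases f X <;> cases f Y <;> rfl

lemma t_negE (X : Formula) : PF (.imp X (.imp (.neg X) Bot)) :=
  PF.taut fun f hn _ _ hi => by
    simp only [Bot, hi, hn]; cases f X <;> cases f (.var 0) <;> rfl

lemma t_negBot (X : Formula) : PF (.imp (.imp (.neg X) Bot) X) :=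
  PF.taut fun f hn _ _ hi => by
    simp only [Bot, hi, hn]; cases f X <;> cases f (.var 0) <;> rfl

lemma t_cases (X : Formula) :
    PF (.imp (.imp X Bot) (.imp (.imp (.neg X) Bot) Bot)) :=
  PF.taut fun f hn _ _ hi => by
    simp only [Bot, hi, hn]; cases f X <;> cases f (.var 0) <;> rfl

lemma t_andI (X Y : Formula) : PF (.imp X (.imp Y (.and X Y))) :=
  PF.taut fun f _ ha _ hi => by
    simp only [hi, ha]; cases f X <;> cases f Y <;> rfl

lemma t_andE1 (X Y : Formula) : PF (.imp (.and X Y) X) :=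
  PF.taut fun f _ ha _ hi => by
    simp only [hi, ha]; cases f X <;> cases f Y <;> rfl

lemma t_andE2 (X Y : Formula) : PF (.imp (.and X Y) Y) :=
  PF.taut fun f _ ha _ hi => by
    simp only [hi, ha]; cases f X <;> cases f Y <;> rfl

lemma t_orI1 (X Y : Formula) : PF (.imp X (.or X Y)) :=
  PF.taut fun f _ _ ho hi => by
    simp only [hi, ho]; cases f X <;> cases f Y <;> rfl

lemma t_orI2 (X Y : Formula) : PF (.imp Y (.or X Y)) :=
  PF.taut fun f _ _ ho hi => by
    simp only [hi, ho]; cases f X <;> cases f Y <;> rfl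

lemma t_orE (X Y : Formula) :
    PF (.imp (.neg X) (.imp (.neg Y) (.imp (.or X Y) Bot))) :=
  PF.taut fun f hn _ ho hi => by
    simp only [Bot, hi, ho, hn]; cases f X <;> cases f Y <;> cases f (.var 0) <;> rfl

lemma t_negImp (X Y : Formula) : PF (.imp (.neg X) (.imp X Y)) :=
  PF.taut fun f hn _ _ hi => by
    simp only [hi, hn]; cases f X <;> cases f Y <;> rfl

lemma t_chain3 (P Q X Z : Formula) :
    PF (.imp (.imp P Q) (.imp (.imp X (.imp Q Z)) (.imp X (.imp P Z)))) :=
  PF.taut fun f _ _ _ hi => by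
    simp only [hi]; cases f P <;> cases f Q <;> cases f X <;> cases f Z <;> rfl

lemma t_contra (P Q : Formula) :
    PF (.imp (.imp P Q) (.imp (.neg Q) (.neg P))) :=
  PF.taut fun f hn _ _ hi => by
    simp only [hi, hn]; cases f P <;> cases f Q <;> rfl

lemma t_negI (X : Formula) : PF (.imp (.imp X Bot) (.neg X)) :=
  PF.taut fun f hn _ _ hi => by
    simp only [Bot, hi, hn]; cases f X <;> cases f (.var 0) <;> rfl

lemma t_quad (Z W P A : Formula) :
    PF (.imp (.imp P Z) (.imp (.imp W (.imp P A)) (.imp (.imp Z W) (.imp P A)))) :=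
  PF.taut fun f _ _ _ hi => by
    simp only [hi]; cases f Z <;> cases f W <;> cases f P <;> cases f A <;> rfl

lemma t_selfapp (W X Z : Formula) :
    PF (.imp (.imp W X) (.imp Z (.imp (.imp Z W) X))) :=
  PF.taut fun f _ _ _ hi => by
    simp only [hi]; cases f W <;> cases f X <;> cases f Z <;> rfl

end Tauts

lemma PF.imp_trans {X Y Z : Formula} (h1 : PF (.imp X Y)) (h2 : PF (.imp Y Z)) :
    PF (.imp X Z) := ((t_comp X Y Z).mp h1).mp h2

lemma PF.mono_right {P Q : Formula} (Z : Formula) (h : PF (.imp P Q)) :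
    PF (.imp (.imp Z P) (.imp Z Q)) := (t_mono P Q Z).mp h

lemma impList_mono {P Q : Formula} (M : List Formula) (h : PF (.imp P Q)) :
    PF (.imp (impList M P) (impList M Q)) := by
  induction M with
  | nil => exact h
  | cons W M ih => exact PF.mono_right W ih

/-- exchange: `(Z → impList M Q) → impList M (Z → Q)` -/
lemma ex1 (Z Q : Formula) (M : List Formula) :
    PF (.imp (.imp Z (impList M Q)) (impList M (.imp Z Q))) := by
  induction M with
  | nil => exact t_id _
  | cons W M ih =>
    exact (t_swap Z W (impList M Q)).imp_trans (PF.mono_right W ih)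

/-- exchange: `impList M (Z → Q) → (Z → impList M Q)` -/
lemma ex2 (Z Q : Formula) (M : List Formula) :
    PF (.imp (impList M (.imp Z Q)) (.imp Z (impList M Q))) := by
  induction M with
  | nil => exact t_id _
  | cons W M ih =>
    exact (PF.mono_right W ih).imp_trans (t_swap W Z (impList M Q))

lemma mp_impList {X Y : Formula} (M₁ M₂ : List Formula) (h2 : PF (impList M₂ X)) :
    PF (.imp (impList M₁ (.imp X Y)) (impList (M₁ ++ M₂) Y)) := by
  induction M₁ with
  | nil =>
    simpa using (ex2 (.imp X Y) Y M₂).mp (impList_mono M₂ ((t_apply X Y)) |>.mp h2)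
  | cons Z M₁ ih => exact PF.mono_right Z ih

/-- permutation invariance -/
lemma impList_perm {L L' : List Formula} (h : L.Perm L') (X : Formula) :
    PF (.imp (impList L X) (impList L' X)) := by
  induction h with
  | nil => exact t_id _
  | cons Z _ ih => exact PF.mono_right Z ih
  | swap a b L => exact t_swap b a (impList L X)
  | trans _ _ ih1 ih2 => exact ih1.imp_trans ih2

/-- self-application: `impList L ((impList L X) → X)` -/
lemma impList_self (L : List Formula) (X : Formula) :
    PF (impList L (.imp (impList L X) X)) := by
  induction L with
  | nil => exact t_id _
  | cons Z L ih =>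
    have h1 : PF (impList L (.imp Z (.imp (.imp Z (impList L X)) X))) :=
      (impList_mono L (t_selfapp (impList L X) X Z)).mp ih
    exact (ex2 Z _ L).mp h1

/-- deduction core at the formula level -/
lemma ded_core (L : List Formula) (X Y : Formula) :
    PF (.imp (impList L Y)
      (impList (L.filter (fun Z => decide (Z ≠ X))) (.imp X Y))) := by
  induction L with
  | nil => exact t_k Y X
  | cons Z L ih =>
    by_cases hZX : Z = X
    · subst hZX
      rw [List.filter_cons, if_neg (by simp)]
      have h1 : PF (.imp (.imp Z (impList L Y))
          (.imp Z (impList (L.filter (fun W => decide (W ≠ Z))) (.imp Z Y)))) :=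
        PF.mono_right Z ih
      have h2 := ex1 Z (.imp Z Y) (L.filter (fun W => decide (W ≠ Z)))
      have h3 : PF (.imp (impList (L.filter (fun W => decide (W ≠ Z))) (.imp Z (.imp Z Y)))
          (impList (L.filter (fun W => decide (W ≠ Z))) (.imp Z Y))) :=
        impList_mono _ (t_contract Z Y)
      exact (h1.imp_trans h2).imp_trans h3
    · rw [List.filter_cons, if_pos (by simp [hZX])]
      exact PF.mono_right Z ih

/-! ### Consistency, maximal consistent sets -/

def Prv (Γ : Set Formula) (X : Formula) : Prop :=
  ∃ L : List Formula, (∀ Y ∈ L, Y ∈ Γ) ∧ PF (impList L X)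

def Con (Γ : Set Formula) : Prop := ¬ Prv Γ Bot

def mcs (w : Set Formula) : Prop := Con w ∧ ∀ X, X ∈ w ∨ Formula.neg X ∈ w

lemma Prv.of_pf {Γ : Set Formula} {X : Formula} (h : PF X) : Prv Γ X :=
  ⟨[], by simp, h⟩

lemma Prv.of_mem {Γ : Set Formula} {X : Formula} (h : X ∈ Γ) : Prv Γ X :=
  ⟨[X], by simpa using h, t_id X⟩

lemma Prv.mono {Γ Δ : Set Formula} {X : Formula} (hs : Γ ⊆ Δ) (h : Prv Γ X) :
    Prv Δ X := by
  obtain ⟨L, hL, hpf⟩ := h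
  exact ⟨L, fun Y hY => hs (hL Y hY), hpf⟩

lemma Prv.mp {Γ : Set Formula} {X Y : Formula} (h1 : Prv Γ (.imp X Y))
    (h2 : Prv Γ X) : Prv Γ Y := by
  obtain ⟨L1, hL1, hpf1⟩ := h1
  obtain ⟨L2, hL2, hpf2⟩ := h2
  refine ⟨L1 ++ L2, ?_, (mp_impList L1 L2 hpf2).mp hpf1⟩
  intro Z hZ
  rcases List.mem_append.1 hZ with h | h
  · exact hL1 Z h
  · exact hL2 Z h

lemma Prv.deduction {Γ : Set Formula} {X Y : Formula}
    (h : Prv (insert X Γ) Y) : Prv Γ (.imp X Y) := by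
  obtain ⟨L, hL, hpf⟩ := h
  refine ⟨L.filter (fun Z => decide (Z ≠ X)), ?_, (ded_core L X Y).mp hpf⟩
  intro Z hZ
  rw [List.mem_filter, decide_eq_true_eq] at hZ
  rcases Set.mem_insert_iff.1 (hL Z hZ.1) with h | h
  · exact absurd h hZ.2
  · exact h

lemma con_of_subset {Γ Δ : Set Formula} (h : Γ ⊆ Δ) (hc : Con Δ) : Con Γ :=
  fun hp => hc (hp.mono h)

lemma lindenbaum {Γ : Set Formula} (h : Con Γ) : ∃ w, Γ ⊆ w ∧ mcs w := by
  obtain ⟨m, hΓm, hmax⟩ :=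
    zorn_subset_nonempty {Δ : Set Formula | Con Δ}
      (fun c hcS hchain hcne => by
        refine ⟨⋃₀ c, ?_, fun s hs => Set.subset_sUnion_of_mem hs⟩
        intro hprv
        obtain ⟨L, hL, hpf⟩ := hprv
        have key : ∀ L' : List Formula, (∀ Z ∈ L', Z ∈ ⋃₀ c) →
            ∃ Δ ∈ c, ∀ Z ∈ L', Z ∈ Δ := by
          intro L' hL'
          induction L' with
          | nil => exact ⟨hcne.choose, hcne.choose_spec, by simp⟩
          | cons Z L'' ih =>
            obtain ⟨Δ', hΔ', hall⟩ := ih (fun W hW => hL' W (by simp [hW]))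
            obtain ⟨Δz, hΔz, hZz⟩ := hL' Z (by simp)
            rcases hchain.total hΔ' hΔz with hss | hss
            · exact ⟨Δz, hΔz, by
                intro W hW
                rcases List.mem_cons.1 hW with rfl | hW
                · exact hZz
                · exact hss (hall W hW)⟩
            · exact ⟨Δ', hΔ', by
                intro W hW
                rcases List.mem_cons.1 hW with rfl | hW
                · exact hss hZz
                · exact hall W hW⟩
        obtain ⟨Δ, hΔc, hall⟩ := key L hL
        exact hcS hΔc ⟨L, hall, hpf⟩)
      Γ h
  refine ⟨m, hΓm, hmax.1, fun X => ?_⟩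
  by_contra hcon
  push_neg at hcon
  obtain ⟨hX, hnX⟩ := hcon
  have hins : ∀ Y : Formula, Y ∉ m → ¬ Con (insert Y m) := by
    intro Y hY hconY
    have := hmax.2 hconY (Set.subset_insert Y m)
    exact hY (this (Set.mem_insert Y m))
  have h1 : Prv m (.imp X Bot) := by
    have := hins X hX
    simp only [Con, not_not] at this
    exact this.deduction
  have h2 : Prv m (.imp (.neg X) Bot) := by
    have := hins (.neg X) hnX
    simp only [Con, not_not] at this
    exact this.deduction
  exact hmax.1 (((Prv.of_pf (t_cases X)).mp h1).mp h2)

namespace mcs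

variable {w : Set Formula}

lemma prv_mem (hw : mcs w) {X : Formula} (h : Prv w X) : X ∈ w := by
  by_contra hX
  have hn : Formula.neg X ∈ w := (hw.2 X).resolve_left hX
  exact hw.1 (((Prv.of_pf (t_negE X)).mp h).mp (Prv.of_mem hn))

lemma thm_mem (hw : mcs w) {X : Formula} (h : PF X) : X ∈ w :=
  hw.prv_mem (Prv.of_pf h)

lemma mp_mem (hw : mcs w) {X Y : Formula} (hxy : Formula.imp X Y ∈ w)
    (hx : X ∈ w) : Y ∈ w :=
  hw.prv_mem ((Prv.of_mem hxy).mp (Prv.of_mem hx))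

lemma not_both (hw : mcs w) {X : Formula} (h1 : X ∈ w)
    (h2 : Formula.neg X ∈ w) : False :=
  hw.1 (((Prv.of_pf (t_negE X)).mp (Prv.of_mem h1)).mp (Prv.of_mem h2))

lemma neg_iff (hw : mcs w) {X : Formula} : Formula.neg X ∈ w ↔ X ∉ w :=
  ⟨fun hn hX => hw.not_both hX hn, fun h => (hw.2 X).resolve_left h⟩

lemma imp_iff (hw : mcs w) {X Y : Formula} :
    Formula.imp X Y ∈ w ↔ (X ∈ w → Y ∈ w) := by
  constructor
  · exact fun h hX => hw.mp_mem h hX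
  · intro h
    by_cases hX : X ∈ w
    · exact hw.mp_mem (hw.thm_mem (t_k Y X)) (h hX)
    · exact hw.mp_mem (hw.thm_mem (t_negImp X Y)) (hw.neg_iff.2 hX)

lemma and_iff (hw : mcs w) {X Y : Formula} :
    Formula.and X Y ∈ w ↔ (X ∈ w ∧ Y ∈ w) := by
  constructor
  · intro h
    exact ⟨hw.mp_mem (hw.thm_mem (t_andE1 X Y)) h,
           hw.mp_mem (hw.thm_mem (t_andE2 X Y)) h⟩
  · intro ⟨hX, hY⟩
    exact hw.mp_mem (hw.mp_mem (hw.thm_mem (t_andI X Y)) hX) hY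

lemma or_iff (hw : mcs w) {X Y : Formula} :
    Formula.or X Y ∈ w ↔ (X ∈ w ∨ Y ∈ w) := by
  constructor
  · intro h
    by_contra hc
    push_neg at hc
    have hnX := hw.neg_iff.2 hc.1
    have hnY := hw.neg_iff.2 hc.2
    have : Formula.imp (.or X Y) Bot ∈ w :=
      hw.mp_mem (hw.mp_mem (hw.thm_mem (t_orE X Y)) hnX) hnY
    exact hw.1 (Prv.of_mem (hw.mp_mem this h))
  · intro h
    rcases h with h | h
    · exact hw.mp_mem (hw.thm_mem (t_orI1 X Y)) h
    · exact hw.mp_mem (hw.thm_mem (t_orI2 X Y)) h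

end mcs

/-! ### Box machinery -/

section BoxMach

variable (bx : Formula → Formula)

lemma bx_impList
    (hkk : ∀ X Y : Formula, PF (.imp (bx (.imp X Y)) (.imp (bx X) (bx Y))))
    (L : List Formula) (X : Formula) :
    PF (.imp (bx (impList L X)) (impList (L.map bx) (bx X))) := by
  induction L with
  | nil => exact t_id _
  | cons Z L ih =>
    exact (hkk Z (impList L X)).imp_trans (PF.mono_right (bx Z) ih)

lemma bx_mem_of
    (hnec : ∀ {X : Formula}, PF X → PF (bx X))
    (hkk : ∀ X Y : Formula, PF (.imp (bx (.imp X Y)) (.imp (bx X) (bx Y))))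
    {w : Set Formula} (hw : mcs w) {L : List Formula} {X : Formula}
    (h : PF (impList L X)) (hmem : ∀ Z ∈ L, bx Z ∈ w) : bx X ∈ w := by
  refine hw.prv_mem ⟨L.map bx, ?_, (bx_impList bx hkk L X).mp (hnec h)⟩
  intro Y hY
  obtain ⟨Z, hZ, rfl⟩ := List.mem_map.1 hY
  exact hmem Z hZ

lemma exists_mcs_bx
    (hnec : ∀ {X : Formula}, PF X → PF (bx X))
    (hkk : ∀ X Y : Formula, PF (.imp (bx (.imp X Y)) (.imp (bx X) (bx Y))))
    {w : Set Formula} {X : Formula} (hw : mcs w)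
    (h : bx X ∉ w) :
    ∃ u, mcs u ∧ {Z | bx Z ∈ w} ⊆ u ∧ Formula.neg X ∈ u := by
  have hcon : Con (insert (Formula.neg X) {Z | bx Z ∈ w}) := by
    intro hprv
    have h1 : Prv {Z | bx Z ∈ w} (.imp (.neg X) Bot) := hprv.deduction
    have h2 : Prv {Z | bx Z ∈ w} X := (Prv.of_pf (t_negBot X)).mp h1
    obtain ⟨L, hL, hpf⟩ := h2
    exact h (bx_mem_of bx (fun {X} => hnec) hkk hw hpf hL)
  obtain ⟨u, hsub, hu⟩ := lindenbaum hcon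
  exact ⟨u, hu, fun Z hZ => hsub (Set.mem_insert_of_mem _ hZ),
    hsub (Set.mem_insert _ _)⟩

end BoxMach

/-! ### Derived modal theorems of PF -/

lemma boxp_mono {X Y : Formula} (h : PF (.imp X Y)) :
    PF (.imp (.boxp X) (.boxp Y)) := (PF.kp X Y).mp (PF.necp h)

lemma boxf_mono {X Y : Formula} (h : PF (.imp X Y)) :
    PF (.imp (.boxf X) (.boxf Y)) := (PF.kf X Y).mp (PF.necf h)

lemma t_dne (X : Formula) : PF (.imp (.neg (.neg X)) X) :=
  PF.taut fun f hn _ _ hi => by simp only [hi, hn]; cases f X <;> rfl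

lemma t_dni (X : Formula) : PF (.imp X (.neg (.neg X))) :=
  PF.taut fun f hn _ _ hi => by simp only [hi, hn]; cases f X <;> rfl

lemma fourp (X : Formula) : PF (.imp (.boxp X) (.boxp (.boxp X))) := by
  have h2 : PF (.imp (.boxp (Formula.and X (.boxp X))) (.boxp X)) :=
    boxp_mono (t_andE1 X (.boxp X))
  have h1 : PF (.imp X (.imp (.boxp (Formula.and X (.boxp X)))
      (Formula.and X (.boxp X)))) :=
    ((t_chain3 (.boxp (Formula.and X (.boxp X))) (.boxp X) X
      (Formula.and X (.boxp X))).mp h2).mp (t_andI X (.boxp X))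
  have h5 : PF (.imp (.boxp X) (.boxp (Formula.and X (.boxp X)))) :=
    ((PF.kp _ _).mp (PF.necp h1)).imp_trans (PF.lob (Formula.and X (.boxp X)))
  exact h5.imp_trans (boxp_mono (t_andE2 X (.boxp X)))

lemma negboxp_stable (Z : Formula) :
    PF (.imp (.neg (.boxp Z)) (.boxf (.neg (.boxp Z)))) := by
  have a1 : PF (.imp (.boxp (.neg (.neg Z))) (.boxp Z)) := boxp_mono (t_dne Z)
  have a2 : PF (.imp (.neg (.boxp Z)) (.neg (.boxp (.neg (.neg Z))))) :=
    (t_contra _ _).mp a1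
  have a3 : PF (.imp (diap (.neg Z)) (.boxf (diap (.neg Z)))) := PF.pf2 (.neg Z)
  have a4 : PF (.imp (.boxp Z) (.boxp (.neg (.neg Z)))) := boxp_mono (t_dni Z)
  have a5 : PF (.imp (diap (.neg Z)) (.neg (.boxp Z))) := (t_contra _ _).mp a4
  exact a2.imp_trans ((a3.imp_trans (boxf_mono a5)))



/-! ### Specialized box lemmas -/

lemma boxp_mem_of {w : Set Formula} (hw : mcs w) {L : List Formula} {X : Formula}
    (h : PF (impList L X)) (hmem : ∀ Z ∈ L, Formula.boxp Z ∈ w) :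
    Formula.boxp X ∈ w :=
  bx_mem_of .boxp (fun h => PF.necp h) PF.kp hw h hmem

lemma boxf_mem_of {w : Set Formula} (hw : mcs w) {L : List Formula} {X : Formula}
    (h : PF (impList L X)) (hmem : ∀ Z ∈ L, Formula.boxf Z ∈ w) :
    Formula.boxf X ∈ w :=
  bx_mem_of .boxf (fun h => PF.necf h) PF.kf hw h hmem

lemma exists_mcs_boxp {w : Set Formula} {X : Formula} (hw : mcs w)
    (h : Formula.boxp X ∉ w) :
    ∃ u, mcs u ∧ (∀ Z, Formula.boxp Z ∈ w → Z ∈ u) ∧ Formula.neg X ∈ u := by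
  obtain ⟨u, hu, hsub, hneg⟩ :=
    exists_mcs_bx .boxp (fun h => PF.necp h) PF.kp hw h
  exact ⟨u, hu, fun Z hZ => hsub hZ, hneg⟩

lemma exists_mcs_boxf {w : Set Formula} {X : Formula} (hw : mcs w)
    (h : Formula.boxf X ∉ w) :
    ∃ u, mcs u ∧ (∀ Z, Formula.boxf Z ∈ w → Z ∈ u) ∧ Formula.neg X ∈ u := by
  obtain ⟨u, hu, hsub, hneg⟩ :=
    exists_mcs_bx .boxf (fun h => PF.necf h) PF.kf hw h
  exact ⟨u, hu, fun Z hZ => hsub hZ, hneg⟩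

/-- S4.2-style directedness for the canonical `boxf` relation. -/
lemma directed_mcs {v v₁ v₂ : Set Formula} (hv : mcs v) (h1 : mcs v₁) (h2 : mcs v₂)
    (s1 : ∀ Z, Formula.boxf Z ∈ v → Z ∈ v₁) (s2 : ∀ Z, Formula.boxf Z ∈ v → Z ∈ v₂) :
    ∃ u, mcs u ∧ (∀ Z, Formula.boxf Z ∈ v₁ → Z ∈ u) ∧
      (∀ Z, Formula.boxf Z ∈ v₂ → Z ∈ u) := by
  classical
  have hcon : Con ({Z | Formula.boxf Z ∈ v₁} ∪ {Z | Formula.boxf Z ∈ v₂}) := by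
    intro hprv
    obtain ⟨L, hL, hpf⟩ := hprv
    set p : Formula → Bool := fun Z => decide (Formula.boxf Z ∈ v₁) with hp
    have hperm : ((L.filter p) ++ (L.filter (fun Z => !p Z))).Perm L :=
      List.filter_append_perm p L
    have hpf2 : PF (impList ((L.filter p) ++ (L.filter (fun Z => !p Z))) Bot) :=
      (impList_perm hperm.symm Bot).mp hpf
    rw [impList_append] at hpf2
    set L₂ := L.filter (fun Z => !p Z) with hL₂
    set W₂ := impList L₂ Bot with hW₂
    have hbf1 : Formula.boxf W₂ ∈ v₁ := by
      refine boxf_mem_of h1 hpf2 ?_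
      intro Z hZ
      rw [List.mem_filter] at hZ
      exact of_decide_eq_true hZ.2
    have hmem2 : ∀ Z ∈ L₂, Formula.boxf Z ∈ v₂ := by
      intro Z hZ
      rw [hL₂, List.mem_filter] at hZ
      have h1' : Formula.boxf Z ∉ v₁ := by
        have := hZ.2
        simp only [hp, Bool.not_eq_true'] at this
        exact of_decide_eq_false this
      rcases hL Z hZ.1 with h | h
      · exact absurd h h1'
      · exact h
    have hself : PF (impList L₂ (.neg W₂)) :=
      (impList_mono L₂ (t_negI W₂)).mp (impList_self L₂ Bot)
    have hbn2 : Formula.boxf (.neg W₂) ∈ v₂ := boxf_mem_of h2 hself hmem2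
    have hd : Formula.neg (.boxf (.neg (.boxf W₂))) ∈ v := by
      refine hv.neg_iff.2 ?_
      intro hmem
      exact h1.not_both hbf1 (s1 _ hmem)
    have hax : Formula.imp (diaf (.boxf W₂)) (.boxf (diaf W₂)) ∈ v :=
      hv.thm_mem (PF.dot2f W₂)
    have hbox : Formula.boxf (diaf W₂) ∈ v := hv.mp_mem hax hd
    have hdv2 : diaf W₂ ∈ v₂ := s2 _ hbox
    exact h2.not_both hdv2 (by
      have : Formula.neg (diaf W₂) = Formula.neg (.neg (.boxf (.neg W₂))) := rfl
      rw [this]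
      exact h2.mp_mem (h2.thm_mem (t_dni (.boxf (.neg W₂)))) hbn2)
  obtain ⟨u, hsub, hu⟩ := lindenbaum hcon
  exact ⟨u, hu, fun Z hZ => hsub (Or.inl hZ), fun Z hZ => hsub (Or.inr hZ)⟩

/-! ### The surgered canonical model -/

section CanonModel

variable (w₀ : Set Formula)

def DD : Type := {v : Set Formula // mcs v ∧ ∀ Z, Formula.boxf Z ∈ w₀ → Z ∈ v}

def MW : Type := {x : Set Formula // mcs x}

def Wor : Type := (ℕ × DD w₀) ⊕ MW

def Rr : Wor w₀ → Wor w₀ → Prop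
  | .inl (k, _), .inl (j, _) => j < k
  | .inl _, .inr x => ∀ Z, Formula.boxp Z ∈ w₀ → Z ∈ x.1
  | .inr x, .inr y => ∀ Z, Formula.boxp Z ∈ x.1 → Z ∈ y.1
  | .inr _, .inl _ => False

def Ss : Wor w₀ → Wor w₀ → Prop
  | .inl (k, v), .inl (j, u) => j = k ∧ ∀ Z, Formula.boxf Z ∈ v.1 → Z ∈ u.1
  | .inr x, .inr y => ∀ Z, Formula.boxf Z ∈ x.1 → Z ∈ y.1
  | .inl _, .inr _ => False
  | .inr _, .inl _ => False

def Vv : Wor w₀ → ℕ → Prop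
  | .inl (_, v), n => Formula.var n ∈ v.1
  | .inr x, n => Formula.var n ∈ x.1

/-- Truth lemma at canonical points. -/
lemma truth_canon (X : Formula) (x : MW) :
    Sat (Rr w₀) (Ss w₀) (Vv w₀) (Sum.inr x) X ↔ X ∈ x.1 := by
  induction X generalizing x with
  | var n => exact Iff.rfl
  | neg Y ih =>
    show (¬ Sat _ _ _ _ Y) ↔ _
    rw [ih, (x.2).neg_iff]
  | and Y Z ihY ihZ =>
    show (Sat _ _ _ _ Y ∧ Sat _ _ _ _ Z) ↔ _
    rw [ihY, ihZ, (x.2).and_iff]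
  | or Y Z ihY ihZ =>
    show (Sat _ _ _ _ Y ∨ Sat _ _ _ _ Z) ↔ _
    rw [ihY, ihZ, (x.2).or_iff]
  | imp Y Z ihY ihZ =>
    show (Sat _ _ _ _ Y → Sat _ _ _ _ Z) ↔ _
    rw [ihY, ihZ, (x.2).imp_iff]
  | boxp Y ih =>
    show (∀ q, Rr w₀ (Sum.inr x) q → Sat _ _ _ q Y) ↔ _
    constructor
    · intro h
      by_contra hb
      obtain ⟨u, hu, hsub, hneg⟩ := exists_mcs_boxp x.2 hb
      have hsat := h (Sum.inr ⟨u, hu⟩) hsub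
      exact hu.not_both ((ih ⟨u, hu⟩).1 hsat) hneg
    · intro h q hq
      match q with
      | Sum.inl p => exact hq.elim
      | Sum.inr y => exact (ih y).2 (hq Y h)
  | boxf Y ih =>
    show (∀ q, Ss w₀ (Sum.inr x) q → Sat _ _ _ q Y) ↔ _
    constructor
    · intro h
      by_contra hb
      obtain ⟨u, hu, hsub, hneg⟩ := exists_mcs_boxf x.2 hb
      have hsat := h (Sum.inr ⟨u, hu⟩) hsub
      exact hu.not_both ((ih ⟨u, hu⟩).1 hsat) hneg
    · intro h q hq
      match q with
      | Sum.inl p => exact hq.elim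
      | Sum.inr y => exact (ih y).2 (hq Y h)

end CanonModel


section CanonModel2

variable (w₀ : Set Formula)

lemma Rr_inl_indep (k : ℕ) (v u : DD w₀) (q : Wor w₀) :
    Rr w₀ (Sum.inl (k, v)) q ↔ Rr w₀ (Sum.inl (k, u)) q := by
  match q with
  | Sum.inl (j, u') => exact Iff.rfl
  | Sum.inr x => exact Iff.rfl

lemma sat_boxp_indep (k : ℕ) (v u : DD w₀) (X : Formula) :
    Sat (Rr w₀) (Ss w₀) (Vv w₀) (Sum.inl (k, v)) (.boxp X) ↔
    Sat (Rr w₀) (Ss w₀) (Vv w₀) (Sum.inl (k, u)) (.boxp X) := by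
  show (∀ q, Rr w₀ (Sum.inl (k, v)) q → _) ↔ (∀ q, Rr w₀ (Sum.inl (k, u)) q → _)
  exact forall_congr' fun q => imp_congr_left (Rr_inl_indep w₀ k v u q)

lemma sat_inr_of_thm (x : MW) {B : Formula} (h : PF B) :
    Sat (Rr w₀) (Ss w₀) (Vv w₀) (Sum.inr x) B :=
  (truth_canon w₀ B x).2 (x.2.thm_mem h)

variable {w₀}

lemma cone_R_closed (hw₀ : mcs w₀) {x u : Set Formula}
    (hx : ∀ Z, Formula.boxp Z ∈ w₀ → Z ∈ x) (hxu : ∀ Z, Formula.boxp Z ∈ x → Z ∈ u) :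
    ∀ Z, Formula.boxp Z ∈ w₀ → Z ∈ u := fun Z hZ =>
  hxu Z (hx _ (hw₀.mp_mem (hw₀.thm_mem (fourp Z)) hZ))

lemma cone_S_closed (hw₀ : mcs w₀) {x u : Set Formula}
    (hx : ∀ Z, Formula.boxp Z ∈ w₀ → Z ∈ x) (hxu : ∀ Z, Formula.boxf Z ∈ x → Z ∈ u) :
    ∀ Z, Formula.boxp Z ∈ w₀ → Z ∈ u := fun Z hZ =>
  hxu Z (hx _ (hw₀.mp_mem (hw₀.thm_mem (PF.pf3 Z)) hZ))

lemma fCont_refl (v : DD w₀) : ∀ Z, Formula.boxf Z ∈ v.1 → Z ∈ v.1 :=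
  fun Z hZ => v.2.1.mp_mem (v.2.1.thm_mem (PF.tf Z)) hZ

/-- every theorem of PF is true at every point of the surgered model -/
lemma thm_sat (hw₀ : mcs w₀) :
    ∀ B : Formula, PF B → ∀ p : Wor w₀, Sat (Rr w₀) (Ss w₀) (Vv w₀) p B := by
  intro B hB
  induction hB with
  | @taut B h =>
    intro p
    classical
    set f : Formula → Bool :=
      fun X => if Sat (Rr w₀) (Ss w₀) (Vv w₀) p X then true else false with hf
    have hfiff : ∀ X, f X = true ↔ Sat (Rr w₀) (Ss w₀) (Vv w₀) p X := by
      intro X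
      rw [hf]
      by_cases hc : Sat (Rr w₀) (Ss w₀) (Vv w₀) p X <;> simp [hc]
    have key := h f
      (fun Y => by
        by_cases hY : Sat (Rr w₀) (Ss w₀) (Vv w₀) p Y
        · have h1 : Sat (Rr w₀) (Ss w₀) (Vv w₀) p (.neg Y) ↔ False :=
            ⟨fun hn => hn hY, fun hn => hn.elim⟩
          simp [hf, hY, h1]
        · have h1 : Sat (Rr w₀) (Ss w₀) (Vv w₀) p (.neg Y) ↔ True :=
            ⟨fun _ => trivial, fun _ => hY⟩
          simp [hf, hY, h1])
      (fun Y Z => by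
        have h1 : Sat (Rr w₀) (Ss w₀) (Vv w₀) p (.and Y Z) ↔
            (Sat (Rr w₀) (Ss w₀) (Vv w₀) p Y ∧ Sat (Rr w₀) (Ss w₀) (Vv w₀) p Z) :=
          Iff.rfl
        by_cases hY : Sat (Rr w₀) (Ss w₀) (Vv w₀) p Y <;>
          by_cases hZ : Sat (Rr w₀) (Ss w₀) (Vv w₀) p Z <;>
          simp [hf, hY, hZ, h1])
      (fun Y Z => by
        have h1 : Sat (Rr w₀) (Ss w₀) (Vv w₀) p (.or Y Z) ↔
            (Sat (Rr w₀) (Ss w₀) (Vv w₀) p Y ∨ Sat (Rr w₀) (Ss w₀) (Vv w₀) p Z) :=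
          Iff.rfl
        by_cases hY : Sat (Rr w₀) (Ss w₀) (Vv w₀) p Y <;>
          by_cases hZ : Sat (Rr w₀) (Ss w₀) (Vv w₀) p Z <;>
          simp [hf, hY, hZ, h1])
      (fun Y Z => by
        have h1 : Sat (Rr w₀) (Ss w₀) (Vv w₀) p (.imp Y Z) ↔
            (Sat (Rr w₀) (Ss w₀) (Vv w₀) p Y → Sat (Rr w₀) (Ss w₀) (Vv w₀) p Z) :=
          Iff.rfl
        by_cases hY : Sat (Rr w₀) (Ss w₀) (Vv w₀) p Y <;>
          by_cases hZ : Sat (Rr w₀) (Ss w₀) (Vv w₀) p Z <;>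
          simp [hf, hY, hZ, h1])
    exact (hfiff B).1 key
  | kp A B => intro p h1 h2 q hq; exact h1 q hq (h2 q hq)
  | kf A B => intro p h1 h2 q hq; exact h1 q hq (h2 q hq)
  | @mp A B h1 h2 ih1 ih2 => intro p; exact ih1 p (ih2 p)
  | @necp A h ih => intro p q hq; exact ih q
  | @necf A h ih => intro p q hq; exact ih q
  | tf B =>
    rintro (⟨k, v⟩ | x)
    · intro h
      exact h (Sum.inl (k, v)) ⟨rfl, fCont_refl v⟩
    · exact sat_inr_of_thm w₀ x (PF.tf B)
  | fourf B =>
    rintro (⟨k, v⟩ | x)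
    · intro h
      rintro (⟨j, u⟩ | x) hq
      · obtain ⟨rfl, hsub⟩ := hq
        rintro (⟨j', u'⟩ | x') hq'
        · obtain ⟨rfl, hsub'⟩ := hq'
          exact h (Sum.inl (j', u')) ⟨rfl, fun Z hZ => hsub' Z (hsub (Formula.boxf Z)
            (v.2.1.mp_mem (v.2.1.thm_mem (PF.fourf Z)) hZ))⟩
        · exact hq'.elim
      · exact hq.elim
    · exact sat_inr_of_thm w₀ x (PF.fourf B)
  | dot2f B =>
    rintro (⟨k, v⟩ | x)
    · intro h
      rintro (⟨j, v₂⟩ | x) hq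
      · obtain ⟨rfl, hs2⟩ := hq
        intro hall
        apply h
        rintro (⟨j', v₁⟩ | x') hq'
        · obtain ⟨rfl, hs1⟩ := hq'
          intro hsatbox
          obtain ⟨u, hu, hfu1, hfu2⟩ := directed_mcs v.2.1 v₁.2.1 v₂.2.1 hs1 hs2
          have huDD : ∀ Z, Formula.boxf Z ∈ w₀ → Z ∈ u := fun Z hZ =>
            hfu1 Z (v₁.2.2 _ (hw₀.mp_mem (hw₀.thm_mem (PF.fourf Z)) hZ))
          have hsatB : Sat (Rr w₀) (Ss w₀) (Vv w₀)
              (Sum.inl (j', (⟨u, hu, huDD⟩ : DD w₀))) B :=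
            hsatbox (Sum.inl (j', ⟨u, hu, huDD⟩)) ⟨rfl, hfu1⟩
          exact hall (Sum.inl (j', ⟨u, hu, huDD⟩)) ⟨rfl, hfu2⟩ hsatB
        · exact hq'.elim
      · exact hq.elim
    · exact sat_inr_of_thm w₀ x (PF.dot2f B)
  | pf1 B =>
    rintro (⟨k, v⟩ | x)
    · intro h
      rintro (⟨j, u⟩ | x) hq
      · obtain ⟨rfl, _⟩ := hq
        exact (sat_boxp_indep w₀ j v u B).1 h
      · exact hq.elim
    · exact sat_inr_of_thm w₀ x (PF.pf1 B)
  | pf2 B =>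
    rintro (⟨k, v⟩ | x)
    · intro h
      rintro (⟨j, u⟩ | x) hq
      · obtain ⟨rfl, _⟩ := hq
        intro hs
        exact h ((sat_boxp_indep w₀ j v u (.neg B)).2 hs)
      · exact hq.elim
    · exact sat_inr_of_thm w₀ x (PF.pf2 B)
  | pf3 B =>
    rintro (⟨k, v⟩ | x)
    · intro h
      rintro (⟨j, u⟩ | x) hq
      · rintro (⟨j', u'⟩ | x') hq'
        · obtain ⟨rfl, _⟩ := hq'
          exact h (Sum.inl (j', u')) hq
        · exact hq'.elim
      · refine (truth_canon w₀ (.boxf B) x).2 ?_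
        by_contra hb
        obtain ⟨u, hu, hsub, hneg⟩ := exists_mcs_boxf x.2 hb
        have hucone : ∀ Z, Formula.boxp Z ∈ w₀ → Z ∈ u := cone_S_closed hw₀ hq hsub
        have hsB : Sat (Rr w₀) (Ss w₀) (Vv w₀) (Sum.inr ⟨u, hu⟩) B :=
          h (Sum.inr ⟨u, hu⟩) hucone
        exact hu.not_both ((truth_canon w₀ B ⟨u, hu⟩).1 hsB) hneg
    · exact sat_inr_of_thm w₀ x (PF.pf3 B)
  | lob B =>
    rintro (⟨k, v⟩ | x)
    · intro h1
      have coneB : ∀ x : MW, (∀ Z, Formula.boxp Z ∈ w₀ → Z ∈ x.1) →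
          B ∈ x.1 ∧ Formula.boxp B ∈ x.1 := by
        intro x hx
        have hib : Formula.imp (.boxp B) B ∈ x.1 :=
          (truth_canon w₀ (.imp (.boxp B) B) x).1 (h1 (Sum.inr x) hx)
        have hbox : Formula.boxp (.imp (.boxp B) B) ∈ x.1 := by
          by_contra hb
          obtain ⟨u, hu, hsub, hneg⟩ := exists_mcs_boxp x.2 hb
          have hucone : ∀ Z, Formula.boxp Z ∈ w₀ → Z ∈ u :=
            cone_R_closed hw₀ hx hsub
          have : Formula.imp (.boxp B) B ∈ u :=
            (truth_canon w₀ (.imp (.boxp B) B) ⟨u, hu⟩).1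
              (h1 (Sum.inr ⟨u, hu⟩) hucone)
          exact hu.not_both this hneg
        have hbb : Formula.boxp B ∈ x.1 := x.2.mp_mem (x.2.thm_mem (PF.lob B)) hbox
        exact ⟨x.2.mp_mem hib hbb, hbb⟩
      have chainB : ∀ j, ∀ u : DD w₀, j < k →
          Sat (Rr w₀) (Ss w₀) (Vv w₀) (Sum.inl (j, u)) B := by
        intro j
        induction j using Nat.strong_induction_on with
        | _ j ih =>
          intro u hj
          have hbox : Sat (Rr w₀) (Ss w₀) (Vv w₀) (Sum.inl (j, u)) (.boxp B) := by
            rintro (⟨j', u'⟩ | x) hq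
            · exact ih j' hq u' (hq.trans hj)
            · exact (truth_canon w₀ B x).2 (coneB x hq).1
          exact h1 (Sum.inl (j, u)) hj hbox
      rintro (⟨j, u⟩ | x) hq
      · exact chainB j u hq
      · exact (truth_canon w₀ B x).2 (coneB x hq).1
    · exact sat_inr_of_thm w₀ x (PF.lob B)

end CanonModel2


/-! ### Subformula lemmas -/

lemma subf_self (X : Formula) : X ∈ subf X := by
  cases X <;> simp [subf]

lemma subf_closed : ∀ (X Y : Formula), Y ∈ subf X → ∀ Z, Z ∈ subf Y → Z ∈ subf X := by
  intro X
  induction X with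
  | var n =>
    intro Y hY Z hZ
    simp only [subf, List.mem_singleton] at hY
    subst hY
    exact hZ
  | neg A ih =>
    intro Y hY Z hZ
    simp only [subf, List.mem_cons] at hY ⊢
    rcases hY with rfl | hY
    · simpa [subf] using hZ
    · exact Or.inr (ih Y hY Z hZ)
  | and A B ihA ihB =>
    intro Y hY Z hZ
    simp only [subf, List.mem_cons, List.mem_append] at hY ⊢
    rcases hY with rfl | hY | hY
    · simpa [subf] using hZ
    · exact Or.inr (Or.inl (ihA Y hY Z hZ))
    · exact Or.inr (Or.inr (ihB Y hY Z hZ))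
  | or A B ihA ihB =>
    intro Y hY Z hZ
    simp only [subf, List.mem_cons, List.mem_append] at hY ⊢
    rcases hY with rfl | hY | hY
    · simpa [subf] using hZ
    · exact Or.inr (Or.inl (ihA Y hY Z hZ))
    · exact Or.inr (Or.inr (ihB Y hY Z hZ))
  | imp A B ihA ihB =>
    intro Y hY Z hZ
    simp only [subf, List.mem_cons, List.mem_append] at hY ⊢
    rcases hY with rfl | hY | hY
    · simpa [subf] using hZ
    · exact Or.inr (Or.inl (ihA Y hY Z hZ))
    · exact Or.inr (Or.inr (ihB Y hY Z hZ))
  | boxp A ih =>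
    intro Y hY Z hZ
    simp only [subf, List.mem_cons] at hY ⊢
    rcases hY with rfl | hY
    · simpa [subf] using hZ
    · exact Or.inr (ih Y hY Z hZ)
  | boxf A ih =>
    intro Y hY Z hZ
    simp only [subf, List.mem_cons] at hY ⊢
    rcases hY with rfl | hY
    · simpa [subf] using hZ
    · exact Or.inr (ih Y hY Z hZ)

lemma subf_neg_sub (Y : Formula) : Y ∈ subf (Formula.neg Y) :=
  List.mem_cons_of_mem _ (subf_self Y)
lemma subf_and_left (Y Z : Formula) : Y ∈ subf (Formula.and Y Z) :=
  List.mem_cons_of_mem _ (List.mem_append_left _ (subf_self Y))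
lemma subf_and_right (Y Z : Formula) : Z ∈ subf (Formula.and Y Z) :=
  List.mem_cons_of_mem _ (List.mem_append_right _ (subf_self Z))
lemma subf_or_left (Y Z : Formula) : Y ∈ subf (Formula.or Y Z) :=
  List.mem_cons_of_mem _ (List.mem_append_left _ (subf_self Y))
lemma subf_or_right (Y Z : Formula) : Z ∈ subf (Formula.or Y Z) :=
  List.mem_cons_of_mem _ (List.mem_append_right _ (subf_self Z))
lemma subf_imp_left (Y Z : Formula) : Y ∈ subf (Formula.imp Y Z) :=
  List.mem_cons_of_mem _ (List.mem_append_left _ (subf_self Y))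
lemma subf_imp_right (Y Z : Formula) : Z ∈ subf (Formula.imp Y Z) :=
  List.mem_cons_of_mem _ (List.mem_append_right _ (subf_self Z))
lemma subf_boxp_sub (Y : Formula) : Y ∈ subf (Formula.boxp Y) :=
  List.mem_cons_of_mem _ (subf_self Y)
lemma subf_boxf_sub (Y : Formula) : Y ∈ subf (Formula.boxf Y) :=
  List.mem_cons_of_mem _ (subf_self Y)

/-! ### The membership and stabilization lemmas -/

section MemLemma

variable {w₀ : Set Formula}

lemma pcontent_eq (hw₀ : mcs w₀) (v : DD w₀) (Y : Formula) :
    Formula.boxp Y ∈ v.1 ↔ Formula.boxp Y ∈ w₀ := by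
  constructor
  · intro h
    by_contra hb
    have h1 : Formula.neg (.boxp Y) ∈ w₀ := hw₀.neg_iff.2 hb
    have h2 : Formula.boxf (.neg (.boxp Y)) ∈ w₀ :=
      hw₀.mp_mem (hw₀.thm_mem (negboxp_stable Y)) h1
    exact v.2.1.not_both h (v.2.2 _ h2)
  · intro h
    exact v.2.2 _ (hw₀.mp_mem (hw₀.thm_mem (PF.pf1 Y)) h)

lemma mem_lemma (hw₀ : mcs w₀) {A : Formula}
    (hPhi : ∀ C, Formula.boxp C ∈ subf A →
      Formula.imp (.boxp C) (.boxf C) ∈ w₀) :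
    ∀ X, X ∈ subf A → ∀ (k : ℕ) (v : DD w₀),
      Sat (Rr w₀) (Ss w₀) (Vv w₀) (Sum.inl (k, v)) X ↔ X ∈ v.1 := by
  intro X
  induction X with
  | var n => intro _ k v; exact Iff.rfl
  | neg Y ih =>
    intro hX k v
    have hY : Y ∈ subf A := subf_closed A _ hX Y (subf_neg_sub Y)
    show (¬ Sat _ _ _ _ Y) ↔ _
    rw [ih hY k v, v.2.1.neg_iff]
  | and Y Z ihY ihZ =>
    intro hX k v
    show (Sat _ _ _ _ Y ∧ Sat _ _ _ _ Z) ↔ _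
    rw [ihY (subf_closed A _ hX Y (subf_and_left Y Z)) k v,
        ihZ (subf_closed A _ hX Z (subf_and_right Y Z)) k v, v.2.1.and_iff]
  | or Y Z ihY ihZ =>
    intro hX k v
    show (Sat _ _ _ _ Y ∨ Sat _ _ _ _ Z) ↔ _
    rw [ihY (subf_closed A _ hX Y (subf_or_left Y Z)) k v,
        ihZ (subf_closed A _ hX Z (subf_or_right Y Z)) k v, v.2.1.or_iff]
  | imp Y Z ihY ihZ =>
    intro hX k v
    show (Sat _ _ _ _ Y → Sat _ _ _ _ Z) ↔ _
    rw [ihY (subf_closed A _ hX Y (subf_imp_left Y Z)) k v,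
        ihZ (subf_closed A _ hX Z (subf_imp_right Y Z)) k v, v.2.1.imp_iff]
  | boxf Y ih =>
    intro hX k v
    have hY : Y ∈ subf A := subf_closed A _ hX Y (subf_boxf_sub Y)
    constructor
    · intro h
      by_contra hb
      obtain ⟨u, hu, hsub, hneg⟩ := exists_mcs_boxf v.2.1 hb
      have huDD : ∀ Z, Formula.boxf Z ∈ w₀ → Z ∈ u := fun Z hZ =>
        hsub Z (v.2.2 _ (hw₀.mp_mem (hw₀.thm_mem (PF.fourf Z)) hZ))
      have hs : Sat (Rr w₀) (Ss w₀) (Vv w₀)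
          (Sum.inl (k, (⟨u, hu, huDD⟩ : DD w₀))) Y :=
        h (Sum.inl (k, ⟨u, hu, huDD⟩)) ⟨rfl, hsub⟩
      exact hu.not_both ((ih hY k ⟨u, hu, huDD⟩).1 hs) hneg
    · intro h
      rintro (⟨j, u⟩ | x) hq
      · obtain ⟨rfl, hsub⟩ := hq
        exact (ih hY j u).2 (hsub Y h)
      · exact hq.elim
  | boxp Y ih =>
    intro hX k v
    have hY : Y ∈ subf A := subf_closed A _ hX Y (subf_boxp_sub Y)
    have hrefl : Formula.imp (.boxp Y) (.boxf Y) ∈ w₀ := hPhi Y hX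
    rw [pcontent_eq hw₀ v Y]
    constructor
    · intro h
      by_contra hb
      obtain ⟨x, hx, hsub, hneg⟩ := exists_mcs_boxp hw₀ hb
      have := h (Sum.inr ⟨x, hx⟩) hsub
      exact hx.not_both ((truth_canon w₀ Y ⟨x, hx⟩).1 this) hneg
    · intro h
      have hfY : Formula.boxf Y ∈ w₀ := hw₀.mp_mem hrefl h
      rintro (⟨j, u⟩ | x) hq
      · exact (ih hY j u).2 (u.2.2 Y hfY)
      · exact (truth_canon w₀ Y x).2 (hq Y h)

lemma stab : ∀ (X : Formula) (k k' : ℕ), deg X ≤ k → deg X ≤ k' →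
    ∀ v : DD w₀,
      (Sat (Rr w₀) (Ss w₀) (Vv w₀) (Sum.inl (k, v)) X ↔
       Sat (Rr w₀) (Ss w₀) (Vv w₀) (Sum.inl (k', v)) X) := by
  intro X
  induction X with
  | var n => intro k k' _ _ v; exact Iff.rfl
  | neg Y ih =>
    intro k k' hk hk' v
    show (¬ _) ↔ (¬ _)
    rw [ih k k' hk hk' v]
  | and Y Z ihY ihZ =>
    intro k k' hk hk' v
    show (_ ∧ _) ↔ (_ ∧ _)
    rw [ihY k k' (le_trans (le_max_left _ _) hk) (le_trans (le_max_left _ _) hk') v,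
        ihZ k k' (le_trans (le_max_right _ _) hk) (le_trans (le_max_right _ _) hk') v]
  | or Y Z ihY ihZ =>
    intro k k' hk hk' v
    show (_ ∨ _) ↔ (_ ∨ _)
    rw [ihY k k' (le_trans (le_max_left _ _) hk) (le_trans (le_max_left _ _) hk') v,
        ihZ k k' (le_trans (le_max_right _ _) hk) (le_trans (le_max_right _ _) hk') v]
  | imp Y Z ihY ihZ =>
    intro k k' hk hk' v
    show (_ → _) ↔ (_ → _)
    rw [ihY k k' (le_trans (le_max_left _ _) hk) (le_trans (le_max_left _ _) hk') v,
        ihZ k k' (le_trans (le_max_right _ _) hk) (le_trans (le_max_right _ _) hk') v]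
  | boxf Y ih =>
    intro k k' hk hk' v
    constructor
    · intro h
      rintro (⟨j, u⟩ | x) hq
      · obtain ⟨rfl, hsub⟩ := hq
        exact (ih _ _ hk hk' u).1 (h (Sum.inl (_, u)) ⟨rfl, hsub⟩)
      · exact hq.elim
    · intro h
      rintro (⟨j, u⟩ | x) hq
      · obtain ⟨rfl, hsub⟩ := hq
        exact (ih _ _ hk' hk u).1 (h (Sum.inl (_, u)) ⟨rfl, hsub⟩)
      · exact hq.elim
  | boxp Y ih =>
    intro k k' hk hk' v
    have hdk : deg Y < k := hk
    have hdk' : deg Y < k' := hk'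
    constructor
    · intro h
      rintro (⟨j, u⟩ | x) hq
      · by_cases hj : j < k
        · exact h (Sum.inl (j, u)) hj
        · have h1 := h (Sum.inl (deg Y, u)) hdk
          exact (ih (deg Y) j (le_refl _)
            (le_trans (le_of_lt hdk) (le_of_not_gt hj)) u).1 h1
      · exact h (Sum.inr x) hq
    · intro h
      rintro (⟨j, u⟩ | x) hq
      · by_cases hj : j < k'
        · exact h (Sum.inl (j, u)) hj
        · have h1 := h (Sum.inl (deg Y, u)) hdk'
          exact (ih (deg Y) j (le_refl _)
            (le_trans (le_of_lt hdk') (le_of_not_gt hj)) u).1 h1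
      · exact h (Sum.inr x) hq

lemma refl_sat (v₀ : DD w₀) (C : Formula) (n : ℕ) (hn : deg C < n) :
    Sat (Rr w₀) (Ss w₀) (Vv w₀) (Sum.inl (n, v₀))
      (.imp (.boxp C) (.boxf C)) := by
  intro h
  rintro (⟨j, u⟩ | x) hq
  · obtain ⟨rfl, _⟩ := hq
    have h1 : Sat (Rr w₀) (Ss w₀) (Vv w₀) (Sum.inl (deg C, u)) C :=
      h (Sum.inl (deg C, u)) hn
    exact (stab C (deg C) _ (le_refl _) (le_of_lt hn) u).1 h1
  · exact hq.elim

end MemLemma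

/-! ### PFomega normal form and conjList lemmas -/

lemma pfomega_normal {A : Formula} (h : PFomega A) :
    ∃ L : List Formula,
      PF (impList (L.map fun C => Formula.imp (.boxp C) (.boxf C)) A) := by
  induction h with
  | ofPF h => exact ⟨[], h⟩
  | reflAx B => exact ⟨[B], t_id _⟩
  | @mp X Y h1 h2 ih1 ih2 =>
    obtain ⟨L1, hp1⟩ := ih1
    obtain ⟨L2, hp2⟩ := ih2
    refine ⟨L1 ++ L2, ?_⟩
    rw [List.map_append]
    exact (mp_impList (L1.map _) (L2.map _) hp2).mp hp1

lemma conj_imp_of_mem : ∀ (M : List Formula) (Z : Formula), Z ∈ M →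
    PF (.imp (conjList M) Z) := by
  intro M
  induction M with
  | nil => intro Z hZ; exact absurd hZ List.not_mem_nil
  | cons B M ih =>
    intro Z hZ
    match M with
    | [] =>
      rcases List.mem_singleton.1 hZ with rfl
      exact t_id Z
    | C :: t =>
      rcases List.mem_cons.1 hZ with rfl | hZ
      · exact t_andE1 Z (conjList (C :: t))
      · exact (t_andE2 B (conjList (C :: t))).imp_trans (ih Z hZ)

lemma impList_conj (M : List Formula) : ∀ (L : List Formula) (X : Formula),
    (∀ Z ∈ L, Z ∈ M) → PF (.imp (impList L X) (.imp (conjList M) X)) := by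
  intro L
  induction L with
  | nil => intro X _; exact t_k X (conjList M)
  | cons Z L ih =>
    intro X hmem
    have hz : PF (.imp (conjList M) Z) := conj_imp_of_mem M Z (hmem Z (by simp))
    have ihh : PF (.imp (impList L X) (.imp (conjList M) X)) :=
      ih X (fun W hW => hmem W (by simp [hW]))
    exact ((t_quad Z (impList L X) (conjList M) X).mp hz).mp ihh

lemma pfomega_conj : ∀ (M : List Formula), (∀ Z ∈ M, PFomega Z) →
    PFomega (conjList M) := by
  intro M
  induction M with
  | nil => exact fun _ => PFomega.ofPF (t_id _)
  | cons B M ih =>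
    intro h
    match M with
    | [] => exact h B (by simp)
    | C :: t =>
      have hB : PFomega B := h B (by simp)
      have hM : PFomega (conjList (C :: t)) := ih (fun Z hZ => h Z (by simp [hZ]))
      exact PFomega.mp (PFomega.mp (PFomega.ofPF (t_andI B (conjList (C :: t)))) hB) hM

lemma phi_mem {A C : Formula} (h : Formula.boxp C ∈ subf A) :
    Formula.imp (.boxp C) (.boxf C) ∈ Phi A :=
  List.mem_filterMap.2 ⟨.boxp C, h, rfl⟩

lemma phi_shape {A Z : Formula} (h : Z ∈ Phi A) :
    ∃ C, Z = Formula.imp (.boxp C) (.boxf C) := by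
  obtain ⟨B, _, heq⟩ := List.mem_filterMap.1 h
  match B, heq with
  | .boxp C, heq =>
    exact ⟨C, (Option.some_injective _ heq).symm⟩

lemma sat_impList {W : Type} {R S : W → W → Prop} {V : W → ℕ → Prop} {p : W} :
    ∀ (L : List Formula) (X : Formula), Sat R S V p (impList L X) →
      (∀ Z ∈ L, Sat R S V p Z) → Sat R S V p X := by
  intro L
  induction L with
  | nil => intro X h _; exact h
  | cons Z L ih =>
    intro X h hall
    exact ih X (h (hall Z (by simp))) (fun W hW => hall W (by simp [hW]))

lemma le_foldr_max : ∀ (l : List ℕ) (a : ℕ), a ∈ l → a ≤ l.foldr max 0 := by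
  intro l
  induction l with
  | nil => intro a ha; exact absurd ha List.not_mem_nil
  | cons b l ih =>
    intro a ha
    rcases List.mem_cons.1 ha with rfl | ha
    · exact le_max_left _ _
    · exact (ih a ha).trans (le_max_right _ _)


theorem statement_11 (A : Formula) :
    PF (.imp (conjList (Phi A)) A) ↔ PFomega A := by
  constructor
  · intro h
    have hconj : PFomega (conjList (Phi A)) := by
      refine pfomega_conj _ (fun Z hZ => ?_)
      obtain ⟨C, rfl⟩ := phi_shape hZ
      exact PFomega.reflAx C
    exact PFomega.mp (PFomega.ofPF h) hconj
  · intro h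
    by_contra hcon
    have hconΓ : Con (insert (Formula.neg A) {Z | Z ∈ Phi A}) := by
      intro hprv
      have h1 : Prv {Z | Z ∈ Phi A} (.imp (.neg A) Bot) := hprv.deduction
      have h2 : Prv {Z | Z ∈ Phi A} A := (Prv.of_pf (t_negBot A)).mp h1
      obtain ⟨L, hL, hpf⟩ := h2
      exact hcon ((impList_conj (Phi A) L A hL).mp hpf)
    obtain ⟨w₀, hsub, hw₀⟩ := lindenbaum hconΓ
    have hPhi : ∀ C, Formula.boxp C ∈ subf A →
        Formula.imp (.boxp C) (.boxf C) ∈ w₀ :=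
      fun C hC => hsub (Set.mem_insert_of_mem _ (phi_mem hC))
    have hnA : Formula.neg A ∈ w₀ := hsub (Set.mem_insert _ _)
    have hv₀DD : ∀ Z, Formula.boxf Z ∈ w₀ → Z ∈ w₀ :=
      fun Z hZ => hw₀.mp_mem (hw₀.thm_mem (PF.tf Z)) hZ
    obtain ⟨Cs, hCs⟩ := pfomega_normal h
    set v₀ : DD w₀ := ⟨w₀, hw₀, hv₀DD⟩ with hv₀
    set n : ℕ := (Cs.map deg).foldr max 0 + 1 with hn
    have hdeg : ∀ C ∈ Cs, deg C < n := by
      intro C hC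
      have : deg C ≤ (Cs.map deg).foldr max 0 :=
        le_foldr_max _ _ (List.mem_map.2 ⟨C, hC, rfl⟩)
      omega
    have hsat : ∀ Z ∈ Cs.map (fun C => Formula.imp (.boxp C) (.boxf C)),
        Sat (Rr w₀) (Ss w₀) (Vv w₀) (Sum.inl (n, v₀)) Z := by
      intro Z hZ
      obtain ⟨C, hC, rfl⟩ := List.mem_map.1 hZ
      exact refl_sat v₀ C n (hdeg C hC)
    have hthm := thm_sat hw₀ _ hCs (Sum.inl (n, v₀))
    have hA : Sat (Rr w₀) (Ss w₀) (Vv w₀) (Sum.inl (n, v₀)) A :=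
      sat_impList _ _ hthm hsat
    have hAmem : A ∈ w₀ :=
      (mem_lemma hw₀ hPhi A (subf_self A) n v₀).1 hA
    exact hw₀.not_both hAmem hnA

end PFPaper
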